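/- Let K₀ > 0 and F₀ > 0, and set a₀ := (F₀/K₀)^{1/3}. Suppose λ : [0,∞) → ℝ is differentiable, positive, satisfies λ(0) = 1 and λ'(t) = -(2/3)·K₀ + (2/3)·F₀·λ(t)⁻³ for all t ≥ 0. Then λ(t) → a₀ and λ(t)⁻¹ → a₀⁻¹ as t → ∞. -/

import Mathlib

open Set Filter Real

/-- Derivative of the squared positive part. -/
lemma hasDerivAt_posPartSq (x : ℝ) :
    HasDerivAt (fun y : ℝ => (max y 0) ^ 2) (2 * max x 0) x := by
  rcases lt_trichotomy x 0 with hx | hx | hx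
  · have h : (fun y : ℝ => (max y 0) ^ 2) =ᶠ[nhds x] fun _ => (0:ℝ) := by
      filter_upwards [Iio_mem_nhds hx] with y hy
      simp [max_eq_right (le_of_lt (Set.mem_Iio.mp hy))]
    have : HasDerivAt (fun _ : ℝ => (0:ℝ)) 0 x := hasDerivAt_const x 0
    have := this.congr_of_eventuallyEq h
    simpa [max_eq_right hx.le] using this
  · subst hx
    rw [hasDerivAt_iff_isLittleO]
    simp only [max_self, ne_eq, OfNat.ofNat_ne_zero, not_false_eq_true, zero_pow, mul_zero,
      smul_zero, sub_zero]
    rw [Asymptotics.isLittleO_iff]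
    intro ε hε
    have hball : {y : ℝ | |y| < ε} ∈ nhds (0:ℝ) := by
      have := Metric.ball_mem_nhds (0:ℝ) hε
      simpa [Metric.ball, Real.dist_eq] using this
    filter_upwards [hball] with y hy
    have h1 : (max y 0) ^ 2 ≤ y ^ 2 := by
      rcases le_total y 0 with h | h
      · simp [max_eq_right h, sq_nonneg]
      · simp [max_eq_left h]
    have h2 : |y| * |y| ≤ ε * |y| := by
      apply mul_le_mul_of_nonneg_right (le_of_lt hy) (abs_nonneg y)
    calc ‖(max y 0) ^ 2‖ = (max y 0) ^ 2 := by
          rw [Real.norm_eq_abs, abs_of_nonneg (sq_nonneg _)]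
      _ ≤ y ^ 2 := h1
      _ = |y| * |y| := by rw [abs_mul_abs_self]; ring
      _ ≤ ε * |y| := h2
      _ = ε * ‖y‖ := by rw [Real.norm_eq_abs]
  · have h : (fun y : ℝ => (max y 0) ^ 2) =ᶠ[nhds x] fun y => y ^ 2 := by
      filter_upwards [Ioi_mem_nhds hx] with y hy
      simp [max_eq_left (le_of_lt (Set.mem_Ioi.mp hy))]
    have : HasDerivAt (fun y : ℝ => y ^ 2) (2 * x) x := by
      simpa using (hasDerivAt_pow 2 x)
    have := this.congr_of_eventuallyEq h
    simpa [max_eq_left hx.le] using this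

/-- If the one-sided derivative on `[0,∞)` is nonpositive, the function is
bounded by its initial value. -/
lemma le_init_of_deriv_nonpos {g g' : ℝ → ℝ}
    (hg : ∀ t ∈ Set.Ici (0:ℝ), HasDerivWithinAt g (g' t) (Set.Ici 0) t)
    (h0 : ∀ t ∈ Set.Ici (0:ℝ), g' t ≤ 0) :
    ∀ t ∈ Set.Ici (0:ℝ), g t ≤ g 0 := by
  have hanti : AntitoneOn g (Set.Ici 0) := by
    apply antitoneOn_of_deriv_nonpos (convex_Ici 0)
    · exact fun t ht => (hg t ht).continuousWithinAt
    · intro x hx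
      rw [interior_Ici] at hx
      exact ((hg x (Set.mem_Ici.mpr (Set.mem_Ioi.mp hx).le)).hasDerivAt
        (Ici_mem_nhds hx)).differentiableAt.differentiableWithinAt
    · intro x hx
      rw [interior_Ici] at hx
      rw [((hg x (Set.mem_Ici.mpr (Set.mem_Ioi.mp hx).le)).hasDerivAt (Ici_mem_nhds hx)).deriv]
      exact h0 x (Set.mem_Ici.mpr (Set.mem_Ioi.mp hx).le)
  exact fun t ht => hanti Set.self_mem_Ici ht ht

/-- For `K₀ > 0`, `F₀ > 0` and `a₀ = (F₀/K₀)^{1/3}`, any positive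
solution of the reduced normalized ODE on `[0,∞)` with `λ(0) = 1` satisfies
`λ(t) → a₀` and `λ(t)⁻¹ → a₀⁻¹` as `t → ∞`. -/
theorem stmt_5 (K₀ F₀ : ℝ) (hK₀ : 0 < K₀) (hF₀ : 0 < F₀) (a₀ : ℝ)
    (ha₀ : a₀ = (F₀ / K₀) ^ ((1:ℝ)/3))
    (lam : ℝ → ℝ) (hpos : ∀ t ∈ Set.Ici (0:ℝ), 0 < lam t) (hl0 : lam 0 = 1)
    (hode : ∀ t ∈ Set.Ici (0:ℝ),
      HasDerivWithinAt lam (-(2/3) * K₀ + (2/3) * F₀ * ((lam t)^3)⁻¹) (Set.Ici 0) t) :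
    Filter.Tendsto lam Filter.atTop (nhds a₀) ∧
    Filter.Tendsto (fun t => (lam t)⁻¹) Filter.atTop (nhds a₀⁻¹) := by
  have ha₀pos : 0 < a₀ := ha₀ ▸ Real.rpow_pos_of_pos (div_pos hF₀ hK₀) _
  have hcube : a₀ ^ 3 = F₀ / K₀ := by
    rw [ha₀, ← Real.rpow_natCast ((F₀/K₀) ^ ((1:ℝ)/3)) 3,
      ← Real.rpow_mul (div_pos hF₀ hK₀).le]
    norm_num
  have hF : F₀ = K₀ * a₀ ^ 3 := by
    rw [hcube]; field_simp
  set d : ℝ → ℝ := fun t => -(2/3) * K₀ + (2/3) * F₀ * ((lam t)^3)⁻¹ with hd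
  have hdeq : ∀ t ∈ Set.Ici (0:ℝ),
      d t = (2/3) * K₀ * (a₀^3 - (lam t)^3) / (lam t)^3 := by
    intro t ht
    have h := (hpos t ht).ne'
    rw [hd]
    field_simp [hF]
    rw [hF]; ring
  -- sign of the derivative
  have hdle : ∀ t ∈ Set.Ici (0:ℝ), a₀ ≤ lam t → d t ≤ 0 := by
    intro t ht h
    rw [hdeq t ht]
    apply div_nonpos_of_nonpos_of_nonneg _ (le_of_lt (pow_pos (hpos t ht) 3))
    have : a₀ ^ 3 ≤ (lam t) ^ 3 := pow_le_pow_left₀ ha₀pos.le h 3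
    nlinarith
  have hdge : ∀ t ∈ Set.Ici (0:ℝ), lam t ≤ a₀ → 0 ≤ d t := by
    intro t ht h
    rw [hdeq t ht]
    apply div_nonneg _ (le_of_lt (pow_pos (hpos t ht) 3))
    have : (lam t) ^ 3 ≤ a₀ ^ 3 := pow_le_pow_left₀ (hpos t ht).le h 3
    nlinarith
  set M : ℝ := max 1 a₀ with hM
  set m : ℝ := min 1 a₀ with hm
  have hM1 : (1:ℝ) ≤ M := le_max_left _ _
  have hMa : a₀ ≤ M := le_max_right _ _
  have hMpos : 0 < M := lt_of_lt_of_le one_pos hM1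
  have hm1 : m ≤ 1 := min_le_left _ _
  have hma : m ≤ a₀ := min_le_right _ _
  have hmpos : 0 < m := lt_min one_pos ha₀pos
  -- upper trapping
  have hup : ∀ t ∈ Set.Ici (0:ℝ), lam t ≤ M := by
    intro t ht
    have hder : ∀ s ∈ Set.Ici (0:ℝ),
        HasDerivWithinAt (fun r => (max (lam r - M) 0) ^ 2)
          (2 * max (lam s - M) 0 * d s) (Set.Ici 0) s := by
      intro s hs
      exact (hasDerivAt_posPartSq (lam s - M)).comp_hasDerivWithinAt s
        ((hode s hs).sub_const M)
    have hnp : ∀ s ∈ Set.Ici (0:ℝ), 2 * max (lam s - M) 0 * d s ≤ 0 := by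
      intro s hs
      rcases le_or_gt (lam s) M with h | h
      · rw [max_eq_right (by linarith)]; ring_nf; simp
      · have h1 : a₀ ≤ lam s := le_of_lt (lt_of_le_of_lt hMa h)
        have h2 : d s ≤ 0 := hdle s hs h1
        have h3 : 0 ≤ 2 * max (lam s - M) 0 := by positivity
        exact mul_nonpos_of_nonneg_of_nonpos h3 h2
    have h := le_init_of_deriv_nonpos hder hnp t ht
    rw [hl0] at h
    have h0 : (max (1 - M) 0 : ℝ) ^ 2 = 0 := by
      rw [max_eq_right (by linarith)]; simp
    rw [h0] at h
    by_contra hc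
    push_neg at hc
    have : (max (lam t - M) 0) ^ 2 > 0 := by
      rw [max_eq_left (by linarith)]; exact pow_pos (by linarith) 2
    linarith
  -- lower trapping
  have hlow : ∀ t ∈ Set.Ici (0:ℝ), m ≤ lam t := by
    intro t ht
    have hder : ∀ s ∈ Set.Ici (0:ℝ),
        HasDerivWithinAt (fun r => (max (m - lam r) 0) ^ 2)
          (2 * max (m - lam s) 0 * (-(d s))) (Set.Ici 0) s := by
      intro s hs
      exact (hasDerivAt_posPartSq (m - lam s)).comp_hasDerivWithinAt s
        ((hode s hs).const_sub m)
    have hnp : ∀ s ∈ Set.Ici (0:ℝ), 2 * max (m - lam s) 0 * (-(d s)) ≤ 0 := by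
      intro s hs
      rcases le_or_gt m (lam s) with h | h
      · rw [max_eq_right (by linarith)]; ring_nf; simp
      · have h1 : lam s ≤ a₀ := le_of_lt (lt_of_lt_of_le h hma)
        have h2 : 0 ≤ d s := hdge s hs h1
        have h3 : 0 ≤ 2 * max (m - lam s) 0 := by positivity
        exact mul_nonpos_of_nonneg_of_nonpos h3 (by linarith)
    have h := le_init_of_deriv_nonpos hder hnp t ht
    rw [hl0] at h
    have h0 : (max (m - 1) 0 : ℝ) ^ 2 = 0 := by
      rw [max_eq_right (by linarith)]; simp
    rw [h0] at h
    by_contra hc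
    push_neg at hc
    have : (max (m - lam t) 0) ^ 2 > 0 := by
      rw [max_eq_left (by linarith)]; exact pow_pos (by linarith) 2
    linarith
  -- exponential decay of (lam t - a₀)^2
  set c : ℝ := (4/3) * K₀ * a₀^2 / M^3 with hc
  have hcpos : 0 < c := by positivity
  have hdecay : ∀ t ∈ Set.Ici (0:ℝ),
      (lam t - a₀)^2 ≤ (1 - a₀)^2 * Real.exp (-(c * t)) := by
    intro t ht
    have hder : ∀ s ∈ Set.Ici (0:ℝ),
        HasDerivWithinAt (fun r => Real.exp (c * r) * (lam r - a₀)^2)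
          (c * Real.exp (c * s) * (lam s - a₀)^2
            + Real.exp (c * s) * (2 * (lam s - a₀) * d s)) (Set.Ici 0) s := by
      intro s hs
      have h1 : HasDerivAt (fun r => Real.exp (c * r)) (c * Real.exp (c * s)) s := by
        simpa [mul_comm] using ((hasDerivAt_id s).const_mul c).exp
      have h2 : HasDerivWithinAt (fun r => (lam r - a₀)^2)
          (2 * (lam s - a₀) * d s) (Set.Ici 0) s := by
        have := ((hode s hs).sub_const a₀).fun_pow 2
        simpa [hd] using this
      exact h1.hasDerivWithinAt.mul h2
    have hnp : ∀ s ∈ Set.Ici (0:ℝ),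
        c * Real.exp (c * s) * (lam s - a₀)^2
          + Real.exp (c * s) * (2 * (lam s - a₀) * d s) ≤ 0 := by
      intro s hs
      have hL : 0 < lam s := hpos s hs
      have hLM : lam s ≤ M := hup s hs
      have key : c * (lam s - a₀)^2 + 2 * (lam s - a₀) * d s ≤ 0 := by
        have e1 : 2 * (lam s - a₀) * d s
            = -((4/3) * K₀ * (lam s - a₀)^2 * ((lam s)^2 + lam s * a₀ + a₀^2)
              / (lam s)^3) := by
          rw [hdeq s hs]
          have h := hL.ne'
          field_simp
          ring
        rw [e1]
        have step1 : c ≤ (4/3) * K₀ * ((lam s)^2 + lam s * a₀ + a₀^2) / (lam s)^3 := by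
          rw [hc, div_le_div_iff₀ (by positivity) (by positivity)]
          have hLM3 : (lam s)^3 ≤ M^3 := pow_le_pow_left₀ hL.le hLM 3
          nlinarith [sq_nonneg (lam s), mul_pos hL ha₀pos, sq_nonneg a₀,
            mul_nonneg (mul_nonneg (by linarith : (0:ℝ) ≤ (4/3) * K₀)
              (by nlinarith : (0:ℝ) ≤ (lam s)^2 + lam s * a₀)) (pow_pos hMpos 3).le]
        have step2 : c * (lam s - a₀)^2
            ≤ ((4/3) * K₀ * ((lam s)^2 + lam s * a₀ + a₀^2) / (lam s)^3)
              * (lam s - a₀)^2 :=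
          mul_le_mul_of_nonneg_right step1 (sq_nonneg _)
        calc c * (lam s - a₀)^2
            + -((4/3) * K₀ * (lam s - a₀)^2 * ((lam s)^2 + lam s * a₀ + a₀^2)
              / (lam s)^3)
            ≤ ((4/3) * K₀ * ((lam s)^2 + lam s * a₀ + a₀^2) / (lam s)^3)
              * (lam s - a₀)^2
              + -((4/3) * K₀ * (lam s - a₀)^2 * ((lam s)^2 + lam s * a₀ + a₀^2)
              / (lam s)^3) := by linarith
          _ = 0 := by ring
      have hexp : 0 < Real.exp (c * s) := Real.exp_pos _
      calc c * Real.exp (c * s) * (lam s - a₀)^2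
          + Real.exp (c * s) * (2 * (lam s - a₀) * d s)
          = Real.exp (c * s) * (c * (lam s - a₀)^2 + 2 * (lam s - a₀) * d s) := by ring
        _ ≤ Real.exp (c * s) * 0 := by
            exact mul_le_mul_of_nonneg_left key hexp.le
        _ = 0 := by ring
    have h := le_init_of_deriv_nonpos hder hnp t ht
    rw [hl0] at h
    simp only [mul_zero, Real.exp_zero, one_mul] at h
    have hexp : 0 < Real.exp (c * t) := Real.exp_pos _
    rw [Real.exp_neg]
    rw [← le_div_iff₀' hexp] at h
    calc (lam t - a₀)^2 ≤ (1 - a₀)^2 / Real.exp (c * t) := h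
      _ = (1 - a₀)^2 * (Real.exp (c * t))⁻¹ := div_eq_mul_inv _ _
  -- conclude
  have hbound : Filter.Tendsto (fun t => (1 - a₀)^2 * Real.exp (-(c * t)))
      Filter.atTop (nhds 0) := by
    have h1 : Filter.Tendsto (fun t : ℝ => c * t) Filter.atTop Filter.atTop :=
      Filter.Tendsto.const_mul_atTop hcpos Filter.tendsto_id
    have h2 : Filter.Tendsto (fun t : ℝ => Real.exp (-(c * t)))
        Filter.atTop (nhds 0) := Real.tendsto_exp_neg_atTop_nhds_zero.comp h1
    simpa using h2.const_mul ((1 - a₀)^2)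
  have hu0 : Filter.Tendsto (fun t => (lam t - a₀)^2) Filter.atTop (nhds 0) := by
    apply squeeze_zero' (Filter.Eventually.of_forall fun t => sq_nonneg _) _ hbound
    filter_upwards [Filter.eventually_ge_atTop (0:ℝ)] with t ht
    exact hdecay t ht
  have habs : Filter.Tendsto (fun t => |lam t - a₀|) Filter.atTop (nhds 0) := by
    have h := (Real.continuous_sqrt.tendsto 0).comp hu0
    simp only [Real.sqrt_zero] at h
    have : (fun t => Real.sqrt ((lam t - a₀)^2)) = fun t => |lam t - a₀| := by
      funext t; exact Real.sqrt_sq_eq_abs _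
    rwa [← this]
  have hsub : Filter.Tendsto (fun t => lam t - a₀) Filter.atTop (nhds 0) :=
    (tendsto_zero_iff_abs_tendsto_zero _).mpr habs
  have hlam : Filter.Tendsto lam Filter.atTop (nhds a₀) := by
    have := hsub.add_const a₀
    simpa using this
  exact ⟨hlam, hlam.inv₀ (ne_of_gt ha₀pos)⟩
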